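/- Let X* be a numeraire. Then the measure P* defined by dP*/dQ = 1/X* (taken to be 0 on {X* = ∞}) is well defined, is absolutely continuous with respect to Q, and belongs to the effective null hypothesis 𝒫_eff, i.e. ∫ X dP* ≤ 1 for every e-variable X. -/
import Mathlib


open MeasureTheory ENNReal Filter Set Topology

variable {Ω : Type*} [MeasurableSpace Ω]

/-- Ratio of extended nonnegative reals with the convention `∞/∞ = 1`
(and `x/∞ = 0`, `∞/x = ∞` for finite `x`). -/
noncomputable def ERatio (x y : ℝ≥0∞) : ℝ≥0∞ := if x = ⊤ ∧ y = ⊤ then 1 else x / y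

/-- `X` is an e-variable for the null hypothesis `Pfam`. -/
def IsEVar (Pfam : Set (Measure Ω)) (X : Ω → ℝ≥0∞) : Prop :=
  Measurable X ∧ ∀ P ∈ Pfam, ∫⁻ ω, X ω ∂P ≤ 1

/-- `Xs` is a numeraire for null `Pfam` and alternative `Q`. -/
def IsNumeraire (Pfam : Set (Measure Ω)) (Q : Measure Ω) (Xs : Ω → ℝ≥0∞) : Prop :=
  IsEVar Pfam Xs ∧ (∀ᵐ ω ∂Q, 0 < Xs ω) ∧
    ∀ X, IsEVar Pfam X → ∫⁻ ω, ERatio (X ω) (Xs ω) ∂Q ≤ 1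

/-- The effective null hypothesis: all finite nonnegative measures against which
every e-variable for `Pfam` has expectation at most one. -/
def Peff (Pfam : Set (Measure Ω)) : Set (Measure Ω) :=
  {P | IsFiniteMeasure P ∧ ∀ X, IsEVar Pfam X → ∫⁻ ω, X ω ∂P ≤ 1}

/-- The measure `P*` with density `1/Xs` w.r.t. `Q` (zero on `{Xs = ∞}`, which is
built into the `ℝ≥0∞` inverse since `⊤⁻¹ = 0`) is absolutely continuous w.r.t. `Q`
and belongs to the effective null hypothesis. -/
theorem ripr_mem_peff (Pfam : Set (Measure Ω)) (hne : Pfam.Nonempty)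
    (hprob : ∀ P ∈ Pfam, IsProbabilityMeasure P)
    (Q : Measure Ω) [IsProbabilityMeasure Q]
    (Xs : Ω → ℝ≥0∞) (hXs : IsNumeraire Pfam Q Xs) :
    Q.withDensity (fun ω => (Xs ω)⁻¹) ≪ Q ∧
    Q.withDensity (fun ω => (Xs ω)⁻¹) ∈ Peff Pfam := by
  obtain ⟨hXsE, hpos, hnum⟩ := hXs
  have hmeas : Measurable fun ω => (Xs ω)⁻¹ := hXsE.1.inv
  have key : ∀ X : Ω → ℝ≥0∞, IsEVar Pfam X →
      ∫⁻ ω, X ω ∂(Q.withDensity fun ω => (Xs ω)⁻¹) ≤ 1 := by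
    intro X hX
    rw [lintegral_withDensity_eq_lintegral_mul Q hmeas hX.1]
    refine le_trans (lintegral_mono fun ω => ?_) (hnum X hX)
    simp only [Pi.mul_apply, ERatio]
    split_ifs with h
    · simp [h.1, h.2]
    · rw [div_eq_mul_inv, mul_comm]
  refine ⟨withDensity_absolutelyContinuous _ _, ?_, key⟩
  constructor
  have hone : IsEVar Pfam (fun _ => (1 : ℝ≥0∞)) := by
    refine ⟨measurable_const, fun P hP => ?_⟩
    have := hprob P hP
    simp [lintegral_one]
  have := key _ hone
  rw [lintegral_one] at this
  exact lt_of_le_of_lt this one_lt_top
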